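/- Suppose a continuous nonnegative function h on [0, T] satisfies h(t) ≤ a t + b t² sup_{τ≤t} h(τ) + c t sup_{τ≤t} h(τ)^p with p > 1 and a, b, c > 0. Then, for t small enough (so that 1 − b t² > 0 and the relevant polynomial has a positive root), setting η = (c t/(1 − b t²))^p and δ = a/(c) · (appropriate normalization), one has sup_{τ≤t} h(τ) ≤ η^{1/p} z₁(η, δ) where z₁ is the smaller positive root of η z^p − z + δ = 0; in particular h(t) ≤ a t (1 + O(t²) + O(t^p)) as t → 0. -/

import Mathlib

open Set MeasureTheory

/-- The smaller positive root `z₁(η, δ)` of `η z^p − z + δ = 0`. -/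
noncomputable def z1 (p η δ : ℝ) : ℝ := sInf {z : ℝ | 0 < z ∧ η * z ^ p - z + δ = 0}

lemma z1_spec (p η δ z z' : ℝ) (hp : 1 < p) (hη : 0 < η) (hδ : 0 < δ)
    (hz : 0 < z) (hzz' : z < z')
    (hQz : η * z ^ p - z + δ = 0) (hQz' : η * z' ^ p - z' + δ = 0) :
    δ ≤ z1 p η δ ∧ z1 p η δ ≤ z ∧
    ∀ x, 0 ≤ x → 0 ≤ η * x ^ p - x + δ → x ≤ z1 p η δ ∨ z' ≤ x := by
  set R : Set ℝ := {x : ℝ | 0 < x ∧ η * x ^ p - x + δ = 0} with hR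
  have hRsub : R ⊆ Ici δ := by
    rintro x ⟨hx, hfx⟩
    have h1 : 0 ≤ η * x ^ p := mul_nonneg hη.le (Real.rpow_nonneg hx.le p)
    simp only [mem_Ici]; linarith
  have hzR : z ∈ R := ⟨hz, hQz⟩
  have hbdd : BddBelow R := ⟨δ, hRsub⟩
  have hfc : Continuous (fun x : ℝ => η * x ^ p - x + δ) := by
    have hply : Continuous (fun x : ℝ => x ^ p) :=
      continuous_iff_continuousAt.2 fun x =>
        Real.continuousAt_rpow_const x p (Or.inr (by linarith))
    exact ((continuous_const.mul hply).sub continuous_id).add continuous_const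
  have hRclosed : IsClosed R := by
    have hre : R = Ici δ ∩ (fun x : ℝ => η * x ^ p - x + δ) ⁻¹' {0} := by
      ext x
      constructor
      · intro hx; exact ⟨hRsub hx, hx.2⟩
      · rintro ⟨hx1, hx2⟩; exact ⟨lt_of_lt_of_le hδ hx1, hx2⟩
    rw [hre]
    exact isClosed_Ici.inter (isClosed_singleton.preimage hfc)
  have hmem : z1 p η δ ∈ R := hRclosed.csInf_mem ⟨z, hzR⟩ hbdd
  have h1 : δ ≤ z1 p η δ := hRsub hmem
  have h2 : z1 p η δ ≤ z := csInf_le hbdd hzR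
  refine ⟨h1, h2, ?_⟩
  set r := z1 p η δ with hrdef
  have hrz' : r < z' := lt_of_le_of_lt h2 hzz'
  have hneg : ∀ x, r < x → x < z' → η * x ^ p - x + δ < 0 := by
    intro x hrx hxz'
    have hsub : 0 < z' - r := by linarith
    set μ : ℝ := (z' - x) / (z' - r) with hμ
    set lam : ℝ := (x - r) / (z' - r) with hlam
    have hμpos : 0 < μ := div_pos (by linarith) hsub
    have hlampos : 0 < lam := div_pos (by linarith) hsub
    have hne : z' - r ≠ 0 := ne_of_gt hsub
    have hsum : μ + lam = 1 := by rw [hμ, hlam]; field_simp; ring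
    have hxeq : μ * r + lam * z' = x := by rw [hμ, hlam]; field_simp; ring
    have hrpos : 0 < r := lt_of_lt_of_le hδ h1
    have hconv := (strictConvexOn_rpow hp).2 (mem_Ici.2 hrpos.le)
      (mem_Ici.2 (by linarith : (0:ℝ) ≤ z')) (by linarith : r ≠ z') hμpos hlampos hsum
    simp only [smul_eq_mul] at hconv
    rw [hxeq] at hconv
    have hmul := mul_lt_mul_of_pos_left hconv hη
    have hr1 : η * r ^ p = r - δ := by linarith [hmem.2]
    have hz'1 : η * z' ^ p = z' - δ := by linarith
    have hexp : η * (μ * r ^ p + lam * z' ^ p)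
        = μ * (η * r ^ p) + lam * (η * z' ^ p) := by ring
    rw [hexp, hr1, hz'1] at hmul
    nlinarith [hmul, hsum, hxeq]
  intro x hx0 hQx
  by_contra hcon
  push_neg at hcon
  obtain ⟨hxr, hxz'⟩ := hcon
  exact absurd hQx (not_le.2 (hneg x hxr hxz'))

lemma sup_run_cont (T : ℝ) (h : ℝ → ℝ) (hcont : ContinuousOn h (Icc 0 T)) :
    ContinuousOn (fun t => sSup (h '' Icc 0 t)) (Icc 0 T) := by
  set S : ℝ → ℝ := fun t => sSup (h '' Icc 0 t) with hS
  have hbdd : ∀ t ∈ Icc (0:ℝ) T, BddAbove (h '' Icc 0 t) := fun t ht =>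
    (isCompact_Icc.image_of_continuousOn (hcont.mono (Icc_subset_Icc_right ht.2))).bddAbove
  have hne : ∀ t ∈ Icc (0:ℝ) T, (h '' Icc 0 t).Nonempty := fun t ht =>
    ⟨h 0, mem_image_of_mem _ ⟨le_refl 0, ht.1⟩⟩
  have hmono : ∀ u ∈ Icc (0:ℝ) T, ∀ v ∈ Icc (0:ℝ) T, u ≤ v → S u ≤ S v := by
    intro u hu v hv huv
    exact csSup_le_csSup (hbdd v hv) (hne u hu) (image_mono (Icc_subset_Icc_right huv))
  rw [Metric.continuousOn_iff]
  intro x hx ε hε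
  have huc := isCompact_Icc.uniformContinuousOn_of_continuous hcont
  rw [Metric.uniformContinuousOn_iff] at huc
  obtain ⟨d, hd, hduc⟩ := huc (ε / 2) (by positivity)
  refine ⟨d, hd, ?_⟩
  intro y hy hdist
  have key : ∀ u ∈ Icc (0:ℝ) T, ∀ v ∈ Icc (0:ℝ) T, u ≤ v → v - u < d → S v ≤ S u + ε / 2 := by
    intro u hu v hv huv hvd
    apply csSup_le (hne v hv)
    rintro w ⟨τ, hτ, rfl⟩
    have hτT : τ ∈ Icc (0:ℝ) T := ⟨hτ.1, le_trans hτ.2 hv.2⟩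
    by_cases hτu : τ ≤ u
    · have : h τ ≤ S u := le_csSup (hbdd u hu) (mem_image_of_mem _ ⟨hτ.1, hτu⟩)
      linarith
    · push_neg at hτu
      have hdτ : dist τ u < d := by
        rw [Real.dist_eq, abs_of_nonneg (by linarith)]
        linarith [hτ.2]
      have := hduc τ hτT u hu hdτ
      rw [Real.dist_eq] at this
      have hhu : h u ≤ S u := le_csSup (hbdd u hu) (mem_image_of_mem _ ⟨hu.1, le_refl u⟩)
      have habs := abs_lt.1 this
      linarith [habs.1, habs.2]
  rw [Real.dist_eq] at hdist ⊢
  rcases le_total x y with hxy | hxy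
  · have h1 := hmono x hx y hy hxy
    have h2 := key x hx y hy hxy (by rw [abs_of_nonneg (by linarith)] at hdist; linarith)
    rw [abs_of_nonneg (by linarith)]
    linarith
  · have h1 := hmono y hy x hx hxy
    have h2 := key y hy x hx hxy (by rw [abs_of_nonpos (by linarith), neg_sub] at hdist; linarith)
    rw [abs_of_nonpos (by linarith)]
    linarith

set_option maxHeartbeats 1000000 in
/-- Nonlinear Gronwall-type bound: if a continuous nonnegative `h` on `[0,T]` with `h(0) = 0`
satisfies `h(t) ≤ a t + b t² sup_{τ≤t} h(τ) + c t (sup_{τ≤t} h(τ))^p`, `p > 1`, `a, b, c > 0`,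
then for small `t` (so that `1 − b t² > 0` and the polynomial `η z^p − z + δ` with
`η = (c t/(1 − b t²))^p`, `δ = a/c` has two positive roots) one has
`sup_{τ≤t} h(τ) ≤ η^{1/p} z₁(η, δ)`; in particular `h(t) ≤ a t (1 + O(t²) + O(t^p))`
as `t → 0`. -/
theorem stmt12 (T p a b c : ℝ) (hT : 0 < T) (hp : 1 < p)
    (ha : 0 < a) (hb : 0 < b) (hc : 0 < c)
    (h : ℝ → ℝ) (hcont : ContinuousOn h (Icc 0 T))
    (hnn : ∀ t ∈ Icc (0:ℝ) T, 0 ≤ h t) (h0 : h 0 = 0)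
    (hineq : ∀ t ∈ Icc (0:ℝ) T,
      h t ≤ a * t + b * t ^ 2 * sSup ((fun τ => h τ) '' Icc (0:ℝ) t)
        + c * t * (sSup ((fun τ => h τ) '' Icc (0:ℝ) t)) ^ p) :
    (∀ t ∈ Icc (0:ℝ) T, 1 - b * t ^ 2 > 0 →
      (∃ z z' : ℝ, 0 < z ∧ z < z' ∧
        (c * t / (1 - b * t ^ 2)) ^ p * z ^ p - z + a / c = 0 ∧
        (c * t / (1 - b * t ^ 2)) ^ p * z' ^ p - z' + a / c = 0) →
      sSup ((fun τ => h τ) '' Icc (0:ℝ) t)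
        ≤ ((c * t / (1 - b * t ^ 2)) ^ p) ^ (1 / p) *
            z1 p ((c * t / (1 - b * t ^ 2)) ^ p) (a / c)) ∧
    (∃ C ≥ (0:ℝ), ∃ t₀ > (0:ℝ), ∀ t ∈ Icc (0:ℝ) (min t₀ T),
      h t ≤ a * t * (1 + C * t ^ 2 + C * t ^ p)) := by
  have hp0 : (0:ℝ) < p := by linarith
  set S : ℝ → ℝ := fun t => sSup (h '' Icc 0 t) with hSdef
  have hbdd : ∀ t ∈ Icc (0:ℝ) T, BddAbove (h '' Icc 0 t) := fun t ht =>
    (isCompact_Icc.image_of_continuousOn (hcont.mono (Icc_subset_Icc_right ht.2))).bddAbove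
  have hne : ∀ t ∈ Icc (0:ℝ) T, (h '' Icc 0 t).Nonempty := fun t ht =>
    ⟨h 0, mem_image_of_mem _ ⟨le_refl 0, ht.1⟩⟩
  have hSmono : ∀ u ∈ Icc (0:ℝ) T, ∀ v ∈ Icc (0:ℝ) T, u ≤ v → S u ≤ S v := by
    intro u hu v hv huv
    exact csSup_le_csSup (hbdd v hv) (hne u hu) (image_mono (Icc_subset_Icc_right huv))
  have hSnn : ∀ t ∈ Icc (0:ℝ) T, 0 ≤ S t := by
    intro t ht
    have : h 0 ≤ S t := le_csSup (hbdd t ht) (mem_image_of_mem _ ⟨le_refl 0, ht.1⟩)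
    rw [h0] at this; exact this
  have hSineq : ∀ t ∈ Icc (0:ℝ) T, S t ≤ a * t + b * t ^ 2 * S t + c * t * (S t) ^ p := by
    intro t ht
    apply csSup_le (hne t ht)
    rintro w ⟨τ, hτ, rfl⟩
    have hτT : τ ∈ Icc (0:ℝ) T := ⟨hτ.1, le_trans hτ.2 ht.2⟩
    have h1 : h τ ≤ a * τ + b * τ ^ 2 * S τ + c * τ * (S τ) ^ p := hineq τ hτT
    have hSτ : S τ ≤ S t := hSmono τ hτT t ht hτ.2
    have hSτnn : 0 ≤ S τ := hSnn τ hτT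
    have hpow : (S τ) ^ p ≤ (S t) ^ p := Real.rpow_le_rpow hSτnn hSτ hp0.le
    have hτ2 : τ ^ 2 ≤ t ^ 2 := pow_le_pow_left₀ hτ.1 hτ.2 2
    have hptnn : 0 ≤ (S t) ^ p := Real.rpow_nonneg (hSnn t ht) p
    have e1 : a * τ ≤ a * t := mul_le_mul_of_nonneg_left hτ.2 ha.le
    have hpnn : 0 ≤ (S τ) ^ p := Real.rpow_nonneg hSτnn p
    have e2 : b * τ ^ 2 * S τ ≤ b * t ^ 2 * S t :=
      mul_le_mul (mul_le_mul_of_nonneg_left hτ2 hb.le) hSτ hSτnn (by positivity)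
    have e3 : c * τ * (S τ) ^ p ≤ c * t * (S t) ^ p :=
      mul_le_mul (mul_le_mul_of_nonneg_left hτ.2 hc.le) hpow hpnn (mul_nonneg hc.le ht.1)
    linarith
  constructor
  · -- part 1
    rintro t ht hD1 ⟨z, z', hz, hzz', hQz, hQz'⟩
    rcases eq_or_lt_of_le ht.1 with htz | htpos
    · exfalso
      have hzero : (c * t / (1 - b * t ^ 2) : ℝ) = 0 := by rw [← htz]; norm_num
      rw [hzero, Real.zero_rpow (ne_of_gt hp0), zero_mul] at hQz hQz'
      linarith
    set D : ℝ := 1 - b * t ^ 2 with hDdef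
    have hD : 0 < D := hD1
    have hβpos : 0 < c * t / D := div_pos (by positivity) hD
    set η : ℝ := (c * t / D) ^ p with hηdef
    have hηpos : 0 < η := Real.rpow_pos_of_pos hβpos p
    have hδpos : 0 < a / c := div_pos ha hc
    obtain ⟨hδr, hrz, htri⟩ := z1_spec p η (a / c) z z' hp hηpos hδpos hz hzz' hQz hQz'
    set r : ℝ := z1 p η (a / c) with hrdef
    have hrpos : 0 < r := lt_of_lt_of_le hδpos hδr
    have hrz' : r < z' := lt_of_le_of_lt hrz hzz'
    have hz'pos : 0 < z' := lt_trans hz hzz'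
    have hδz' : a / c < z' := by
      have h1 : 0 < η * z' ^ p := mul_pos hηpos (Real.rpow_pos_of_pos hz'pos p)
      linarith
    set g : ℝ → ℝ := fun s => S s * (1 - b * s ^ 2) / (c * s) with hgdef
    -- claim A
    have claimA : ∀ s, 0 < s → s ≤ t → 0 ≤ g s ∧ g s ≤ a / c + η * (g s) ^ p := by
      intro s hs0 hst
      have hsT : s ∈ Icc (0:ℝ) T := ⟨hs0.le, le_trans hst ht.2⟩
      have hs2 : s ^ 2 ≤ t ^ 2 := pow_le_pow_left₀ hs0.le hst 2
      have hDs : D ≤ 1 - b * s ^ 2 := by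
        have : b * s ^ 2 ≤ b * t ^ 2 := mul_le_mul_of_nonneg_left hs2 hb.le
        rw [hDdef]; linarith
      have hDspos : (0:ℝ) < 1 - b * s ^ 2 := lt_of_lt_of_le hD hDs
      have hcs : (0:ℝ) < c * s := by positivity
      have hSs : 0 ≤ S s := hSnn s hsT
      have gnn : 0 ≤ g s := by
        rw [hgdef]
        exact div_nonneg (mul_nonneg hSs hDspos.le) hcs.le
      refine ⟨gnn, ?_⟩
      have hu := hSineq s hsT
      have key1 : S s * (1 - b * s ^ 2) ≤ a * s + c * s * (S s) ^ p := by linarith [hu]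
      have key2 : g s ≤ (a * s + c * s * (S s) ^ p) / (c * s) := by
        rw [hgdef]
        exact div_le_div_of_nonneg_right key1 hcs.le
      have key3 : (a * s + c * s * (S s) ^ p) / (c * s) = a / c + (S s) ^ p := by
        field_simp
      have key4 : (S s) ^ p ≤ η * (g s) ^ p := by
        have hgeq : S s = (c * s / (1 - b * s ^ 2)) * g s := by
          rw [hgdef]
          have hDne : (1 - b * s ^ 2) ≠ 0 := hDspos.ne'
          show S s = c * s / (1 - b * s ^ 2) * (S s * (1 - b * s ^ 2) / (c * s))
          rw [div_mul_div_comm, eq_div_iff (mul_ne_zero hDne hcs.ne')]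
          ring
        have hβs : (0:ℝ) ≤ c * s / (1 - b * s ^ 2) := le_of_lt (div_pos hcs hDspos)
        have hβsle : c * s / (1 - b * s ^ 2) ≤ c * t / D :=
          div_le_div₀ (mul_nonneg hc.le htpos.le) (mul_le_mul_of_nonneg_left hst hc.le) hD hDs
        calc (S s) ^ p = ((c * s / (1 - b * s ^ 2)) * g s) ^ p := by rw [← hgeq]
          _ = (c * s / (1 - b * s ^ 2)) ^ p * (g s) ^ p := Real.mul_rpow hβs gnn
          _ ≤ (c * t / D) ^ p * (g s) ^ p :=
              mul_le_mul_of_nonneg_right (Real.rpow_le_rpow hβs hβsle hp0.le)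
                (Real.rpow_nonneg gnn p)
          _ = η * (g s) ^ p := by rw [hηdef]
      rw [key3] at key2
      linarith
    -- continuity of g
    have claimCont : ∀ s₀, 0 < s₀ → ContinuousOn g (Icc s₀ t) := by
      intro s₀ hs₀
      have hsub : Icc s₀ t ⊆ Icc 0 T := Icc_subset_Icc hs₀.le ht.2
      rw [hgdef]
      apply ContinuousOn.div
      · exact ((sup_run_cont T h hcont).mono hsub).mul
          (Continuous.continuousOn (by continuity))
      · exact Continuous.continuousOn (by continuity)
      · intro s hs
        exact ne_of_gt (mul_pos hc (lt_of_lt_of_le hs₀ hs.1))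
    -- claim C : small s₀ with g s₀ ≤ r
    have claimC : ∃ s₀, 0 < s₀ ∧ s₀ ≤ t ∧ g s₀ ≤ r := by
      set M : ℝ := S t with hMdef
      have hM : 0 ≤ M := hSnn t ht
      have hMp : 0 ≤ M ^ (p - 1) := Real.rpow_nonneg hM (p - 1)
      set K : ℝ := b * t + c * M ^ (p - 1) + 1 with hKdef
      have hK : 0 < K := by positivity
      have hacz : a < z' * c := (div_lt_iff₀ hc).1 hδz'
      set κ₁ : ℝ := a / (c * z') with hκ₁def
      have hκ₁pos : 0 < κ₁ := div_pos ha (by positivity)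
      have hκ₁lt : κ₁ < 1 := (div_lt_one (by positivity)).2 (by linarith)
      set κ₀ : ℝ := (1 - κ₁) / 2 with hκ₀def
      have hκ₀pos : 0 < κ₀ := by rw [hκ₀def]; linarith
      have hκ₀lt : κ₀ < 1 / 2 := by rw [hκ₀def]; linarith
      set s₀ : ℝ := min t (κ₀ / K) with hs₀def
      have hs₀pos : 0 < s₀ := lt_min htpos (div_pos hκ₀pos hK)
      have hs₀t : s₀ ≤ t := min_le_left _ _
      refine ⟨s₀, hs₀pos, hs₀t, ?_⟩
      have hs₀T : s₀ ∈ Icc (0:ℝ) T := ⟨hs₀pos.le, le_trans hs₀t ht.2⟩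
      have hs₀K : s₀ ≤ κ₀ / K := min_le_right _ _
      have hs₀Kκ : K * s₀ ≤ κ₀ := by
        rw [← le_div_iff₀' hK]; exact hs₀K
      have hineqs := hSineq s₀ hs₀T
      set u : ℝ := S s₀ with hudef
      have hu0 : 0 ≤ u := hSnn s₀ hs₀T
      have huM : u ≤ M := hSmono s₀ hs₀T t ht hs₀t
      have hup : u ^ p ≤ M ^ (p - 1) * u := by
        rcases eq_or_lt_of_le hu0 with hu0' | hu0'
        · rw [← hu0', Real.zero_rpow (ne_of_gt hp0), mul_zero]
        · have he : u ^ p = u ^ (p - 1) * u := by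
            rw [← Real.rpow_add_one (ne_of_gt hu0') (p - 1)]
            norm_num
          rw [he]
          exact mul_le_mul_of_nonneg_right
            (Real.rpow_le_rpow hu0'.le huM (by linarith)) hu0
      -- (1 - κ) u ≤ a s₀ with κ = b s₀² + c s₀ M^{p-1}
      have hκle : b * s₀ ^ 2 + c * s₀ * M ^ (p - 1) ≤ κ₀ := by
        have h1 : b * s₀ ^ 2 ≤ b * t * s₀ := by
          linarith [mul_nonneg (mul_nonneg hb.le hs₀pos.le) (sub_nonneg.2 hs₀t)]
        have h2 : K * s₀ = b * t * s₀ + (c * M ^ (p - 1)) * s₀ + s₀ := by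
          rw [hKdef]; ring
        linarith [hs₀Kκ, hs₀pos.le]
      have hmain : (1 - κ₀) * u ≤ a * s₀ := by
        have h3 : c * s₀ * u ^ p ≤ c * s₀ * (M ^ (p - 1) * u) :=
          mul_le_mul_of_nonneg_left hup (by positivity)
        linarith [mul_le_mul_of_nonneg_right hκle hu0, hineqs]
      -- a * s₀ < (1 - κ₀) * (z' * (c * s₀)) ... conclude u < z' * (c * s₀) / 1 ...
      have hκ₁eq : κ₁ * (c * z') = a := by
        rw [hκ₁def]; field_simp
      have hstrict : a * s₀ < (1 - κ₀) * (z' * c * s₀) := by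
        have hexp : (1 - κ₀) = (1 + κ₁) / 2 := by rw [hκ₀def]; ring
        have h8 : κ₁ * (c * z') * s₀ = a * s₀ := by rw [hκ₁eq]
        rw [hexp]
        linarith [h8, mul_pos (sub_pos.2 hacz) hs₀pos]
      have hulec : u < z' * c * s₀ := by
        have h4 : (1 - κ₀) * u < (1 - κ₀) * (z' * c * s₀) := lt_of_le_of_lt hmain hstrict
        have h5 : 0 < 1 - κ₀ := by linarith
        exact lt_of_mul_lt_mul_left h4 h5.le
      have hgs₀ : g s₀ < z' := by
        have hcs₀ : (0:ℝ) < c * s₀ := by positivity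
        have hbs : b * s₀ ^ 2 ≥ 0 := by positivity
        have h6 : g s₀ ≤ u / (c * s₀) := by
          rw [hgdef, hudef]
          apply div_le_div_of_nonneg_right _ hcs₀.le
          have h9 : 0 ≤ b * s₀ ^ 2 * u := mul_nonneg (mul_nonneg hb.le (sq_nonneg s₀)) hu0
          linarith [h9]
        have h7 : u / (c * s₀) < z' := (div_lt_iff₀ hcs₀).2 (by linarith [hulec])
        linarith
      obtain ⟨gnn, gQ⟩ := claimA s₀ hs₀pos hs₀t
      rcases htri (g s₀) gnn (by linarith) with hle | hge
      · exact hle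
      · linarith
    -- conclude g t ≤ r
    have hgt : g t ≤ r := by
      by_contra hcon
      push_neg at hcon
      obtain ⟨gnnt, gQt⟩ := claimA t htpos (le_refl t)
      have hz'gt : z' ≤ g t := by
        rcases htri (g t) gnnt (by linarith) with hle | hge
        · linarith
        · exact hge
      obtain ⟨s₀, hs₀pos, hs₀t, hgs₀⟩ := claimC
      set mid : ℝ := (r + z') / 2 with hmid
      have hmem : mid ∈ Icc (g s₀) (g t) := ⟨by rw [hmid]; linarith, by rw [hmid]; linarith⟩
      have := intermediate_value_Icc hs₀t (claimCont s₀ hs₀pos) hmem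
      obtain ⟨s, hs, hgs⟩ := this
      have hspos : 0 < s := lt_of_lt_of_le hs₀pos hs.1
      obtain ⟨gnns, gQs⟩ := claimA s hspos hs.2
      rcases htri (g s) gnns (by linarith) with hle | hge
      · rw [hgs] at hle; rw [hmid] at hle; linarith
      · rw [hgs] at hge; rw [hmid] at hge; linarith
    -- final algebra
    have hβeq : (η) ^ (1 / p) = c * t / D := by
      rw [hηdef, ← Real.rpow_mul hβpos.le, mul_one_div, div_self (ne_of_gt hp0),
        Real.rpow_one]
    show S t ≤ η ^ (1 / p) * r
    rw [hβeq]
    have h1 : S t * D / (c * t) ≤ r := by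
      rw [hgdef] at hgt
      simpa using hgt
    have hct : (0:ℝ) < c * t := by positivity
    rw [div_le_iff₀ hct] at h1
    rw [div_mul_eq_mul_div, le_div_iff₀ hD]
    linarith [h1]
  · -- part 2
    set M : ℝ := S T with hMdef
    have hTT : T ∈ Icc (0:ℝ) T := ⟨hT.le, le_refl T⟩
    have hM : 0 ≤ M := hSnn T hTT
    have hMp : 0 ≤ M ^ (p - 1) := Real.rpow_nonneg hM (p - 1)
    set C : ℝ := max (2 * b) (c * (2 * a) ^ p / a) with hCdef
    have hC0 : (0:ℝ) ≤ C := le_trans (by positivity) (le_max_left _ _)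
    set t₀ : ℝ := min (1 / (4 * (b + 1))) (min 1 (1 / (4 * (c * M ^ (p - 1) + 1)))) with ht₀def
    have ht₀pos : 0 < t₀ := by
      apply lt_min (by positivity) (lt_min one_pos (by positivity))
    refine ⟨C, hC0, t₀, ht₀pos, ?_⟩
    intro t htm
    have ht0 : 0 ≤ t := htm.1
    have htT : t ∈ Icc (0:ℝ) T := ⟨ht0, le_trans htm.2 (min_le_right _ _)⟩
    have htt₀ : t ≤ t₀ := le_trans htm.2 (min_le_left _ _)
    have ht1 : t ≤ 1 := le_trans htt₀ (le_trans (min_le_right _ _) (min_le_left _ _))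
    have htb : t ≤ 1 / (4 * (b + 1)) := le_trans htt₀ (min_le_left _ _)
    have htc : t ≤ 1 / (4 * (c * M ^ (p - 1) + 1)) :=
      le_trans htt₀ (le_trans (min_le_right _ _) (min_le_right _ _))
    have hbt : b * t ^ 2 ≤ 1 / 4 := by
      have h1 : t * (4 * (b + 1)) ≤ 1 := by
        rw [← le_div_iff₀ (by positivity)]; exact htb
      linarith [mul_nonneg (mul_nonneg hb.le ht0) (sub_nonneg.2 ht1),
        mul_nonneg hb.le ht0, ht0]
    have hct : c * t * M ^ (p - 1) ≤ 1 / 4 := by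
      have h1 : t * (4 * (c * M ^ (p - 1) + 1)) ≤ 1 := by
        rw [← le_div_iff₀ (by positivity)]; exact htc
      linarith [ht0]
    have hSt : 0 ≤ S t := hSnn t htT
    have hStM : S t ≤ M := hSmono t htT T hTT htT.2
    have hup : (S t) ^ p ≤ M ^ (p - 1) * S t := by
      rcases eq_or_lt_of_le hSt with h' | h'
      · rw [← h', Real.zero_rpow (ne_of_gt hp0), mul_zero]
      · have he : (S t) ^ p = (S t) ^ (p - 1) * S t := by
          rw [← Real.rpow_add_one (ne_of_gt h') (p - 1)]
          norm_num
        rw [he]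
        exact mul_le_mul_of_nonneg_right
          (Real.rpow_le_rpow h'.le hStM (by linarith)) hSt
    have hSin := hSineq t htT
    have hS2 : S t ≤ 2 * a * t := by
      have h3 : c * t * (S t) ^ p ≤ c * t * (M ^ (p - 1) * S t) :=
        mul_le_mul_of_nonneg_left hup (by positivity)
      linarith [hSin, h3, mul_le_mul_of_nonneg_right hbt hSt,
        mul_le_mul_of_nonneg_right hct hSt]
    have hhin : h t ≤ a * t + b * t ^ 2 * S t + c * t * (S t) ^ p := hineq t htT
    have h2b : 2 * b ≤ C := le_max_left _ _
    have h2c : c * (2 * a) ^ p / a ≤ C := le_max_right _ _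
    have hpow2 : (S t) ^ p ≤ (2 * a) ^ p * t ^ p := by
      calc (S t) ^ p ≤ (2 * a * t) ^ p := Real.rpow_le_rpow hSt hS2 hp0.le
        _ = (2 * a) ^ p * t ^ p := Real.mul_rpow (by positivity) ht0
    have htp : 0 ≤ t ^ p := Real.rpow_nonneg ht0 p
    have step1 : h t ≤ a * t + b * t ^ 2 * (2 * a * t) + c * t * ((2 * a) ^ p * t ^ p) := by
      have e1 : b * t ^ 2 * S t ≤ b * t ^ 2 * (2 * a * t) :=
        mul_le_mul_of_nonneg_left hS2 (by positivity)
      have e2 : c * t * (S t) ^ p ≤ c * t * ((2 * a) ^ p * t ^ p) :=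
        mul_le_mul_of_nonneg_left hpow2 (by positivity)
      linarith
    have step2 : a * t + b * t ^ 2 * (2 * a * t) + c * t * ((2 * a) ^ p * t ^ p)
        = a * t * (1 + (2 * b) * t ^ 2 + (c * (2 * a) ^ p / a) * t ^ p) := by
      field_simp
    have step3 : a * t * (1 + (2 * b) * t ^ 2 + (c * (2 * a) ^ p / a) * t ^ p)
        ≤ a * t * (1 + C * t ^ 2 + C * t ^ p) := by
      apply mul_le_mul_of_nonneg_left _ (by positivity : (0:ℝ) ≤ a * t)
      have e3 : (2 * b) * t ^ 2 ≤ C * t ^ 2 :=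
        mul_le_mul_of_nonneg_right h2b (sq_nonneg t)
      have e4 : (c * (2 * a) ^ p / a) * t ^ p ≤ C * t ^ p :=
        mul_le_mul_of_nonneg_right h2c htp
      linarith
    calc h t ≤ a * t + b * t ^ 2 * (2 * a * t) + c * t * ((2 * a) ^ p * t ^ p) := step1
      _ = a * t * (1 + (2 * b) * t ^ 2 + (c * (2 * a) ^ p / a) * t ^ p) := step2
      _ ≤ a * t * (1 + C * t ^ 2 + C * t ^ p) := step3
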